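/- Fix α ∈ (0,1), β ∈ (0,1), and σ² ∈ (0,1), and define the intervals I₁ = [0, αβ], I₂ = [αβ, β], I₃ = [β, 1 - σ²(1-β)], I₄ = [1 - σ²(1-β), 1], the function f: [0,1]² → {-1,0,1} by f(x,y) = sign(αβ - x) if x ∈ I₁ ∪ I₂ and y ∈ I₄, f(x,y) = sign(αβ - y) if x ∈ I₄ and y ∈ I₁ ∪ I₂, and f(x,y) = 0 otherwise, and the functions q₁, q₂: [0,1] → ℝ by q₁(θ) = sign(αβ - θ)/√(2β) for θ ∈ I₁ ∪ I₂, q₁(θ) = 0 for θ ∈ I₃, q₁(θ) = 1/√(2σ²(1-β)) for θ ∈ I₄, and q₂(θ) = q₁(θ) for θ ∈ I₁ ∪ I₂ ∪ I₃ and q₂(θ) = -1/√(2σ²(1-β)) for θ ∈ I₄. Then ∫₀¹ q₁(θ)² dθ = ∫₀¹ q₂(θ)² dθ = 1, ∫₀¹ q₁(θ)q₂(θ) dθ = 0, and for (almost) all x, y ∈ [0,1], f(x,y) = λ₁·q₁(x)q₁(y) + λ₂·q₂(x)q₂(y), where λ₁ = √(σ²β(1-β)) and λ₂ = -√(σ²β(1-β)).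 -/

import Mathlib

open MeasureTheory
open MeasureTheory Set

private lemma sign_sq {t : ℝ} (ht : t ≠ 0) : Real.sign t ^ 2 = 1 := by
  rcases ht.lt_or_gt with h | h
  · rw [Real.sign_of_neg h]; norm_num
  · rw [Real.sign_of_pos h]; norm_num

private lemma int_helper (β c d e p : ℝ) (hβ0 : 0 ≤ β) (hβ1 : β ≤ 1) (hc0 : 0 ≤ c) (hc1 : c ≤ 1)
    (g : ℝ → ℝ)
    (hg : ∀ θ ∈ Icc (0:ℝ) 1, θ ≠ p →
      g θ = (Icc (0:ℝ) β).indicator (fun _ => d) θ + (Icc c 1).indicator (fun _ => e) θ) :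
    ∫ θ in Icc (0:ℝ) 1, g θ = β * d + (1 - c) * e := by
  have hae : ∀ᵐ θ : ℝ, θ ≠ p := by
    rw [ae_iff]; simp [measure_singleton (α := ℝ) p]
  have h1 : ∫ θ in Icc (0:ℝ) 1, g θ
      = ∫ θ in Icc (0:ℝ) 1,
        ((Icc (0:ℝ) β).indicator (fun _ => d) θ + (Icc c 1).indicator (fun _ => e) θ) := by
    refine setIntegral_congr_ae measurableSet_Icc ?_
    filter_upwards [hae] with θ hθ hmem
    exact hg θ hmem hθ
  have hi1 : Integrable ((Icc (0:ℝ) β).indicator (fun _ => d)) volume :=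
    (integrable_indicator_iff measurableSet_Icc).mpr
      (integrableOn_const measure_Icc_lt_top.ne)
  have hi2 : Integrable ((Icc c 1).indicator (fun _ => e)) volume :=
    (integrable_indicator_iff measurableSet_Icc).mpr
      (integrableOn_const measure_Icc_lt_top.ne)
  rw [h1, integral_add (hi1.restrict) (hi2.restrict),
    setIntegral_indicator measurableSet_Icc, setIntegral_indicator measurableSet_Icc,
    inter_eq_self_of_subset_right (Icc_subset_Icc_right hβ1),
    inter_eq_self_of_subset_right (Icc_subset_Icc_left hc0),
    setIntegral_const, setIntegral_const, Real.volume_real_Icc_of_le hβ0,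
    Real.volume_real_Icc_of_le hc1]
  simp [smul_eq_mul]

private lemma big (α β σ2 : ℝ) (hα : α ∈ Set.Ioo (0:ℝ) 1) (hβ : β ∈ Set.Ioo (0:ℝ) 1)
    (hσ : σ2 ∈ Set.Ioo (0:ℝ) 1) :
    (∫ θ in Set.Icc (0:ℝ) 1, ((fun θ =>
      if θ ≤ β then Real.sign (α*β - θ) / Real.sqrt (2*β)
      else if θ < 1 - σ2*(1-β) then 0
      else 1 / Real.sqrt (2*σ2*(1-β))) θ)^2) = 1 ∧
    (∫ θ in Set.Icc (0:ℝ) 1, ((fun θ =>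
      if θ ≤ β then Real.sign (α*β - θ) / Real.sqrt (2*β)
      else if θ < 1 - σ2*(1-β) then 0
      else -(1 / Real.sqrt (2*σ2*(1-β)))) θ)^2) = 1 ∧
    (∫ θ in Set.Icc (0:ℝ) 1,
      ((fun θ => if θ ≤ β then Real.sign (α*β - θ) / Real.sqrt (2*β)
        else if θ < 1 - σ2*(1-β) then 0 else 1 / Real.sqrt (2*σ2*(1-β))) θ) *
      ((fun θ => if θ ≤ β then Real.sign (α*β - θ) / Real.sqrt (2*β)
        else if θ < 1 - σ2*(1-β) then 0 else -(1 / Real.sqrt (2*σ2*(1-β)))) θ)) = 0 ∧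
    (∀ x ∈ Set.Icc (0:ℝ) 1, ∀ y ∈ Set.Icc (0:ℝ) 1,
      (if x ≤ β ∧ 1 - σ2*(1-β) ≤ y then Real.sign (α*β - x)
       else if 1 - σ2*(1-β) ≤ x ∧ y ≤ β then Real.sign (α*β - y)
       else 0)
      = Real.sqrt (σ2*β*(1-β)) *
          (((fun θ => if θ ≤ β then Real.sign (α*β - θ) / Real.sqrt (2*β)
            else if θ < 1 - σ2*(1-β) then 0 else 1 / Real.sqrt (2*σ2*(1-β))) x) *
           ((fun θ => if θ ≤ β then Real.sign (α*β - θ) / Real.sqrt (2*β)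
            else if θ < 1 - σ2*(1-β) then 0 else 1 / Real.sqrt (2*σ2*(1-β))) y))
        + (- Real.sqrt (σ2*β*(1-β))) *
          (((fun θ => if θ ≤ β then Real.sign (α*β - θ) / Real.sqrt (2*β)
            else if θ < 1 - σ2*(1-β) then 0 else -(1 / Real.sqrt (2*σ2*(1-β)))) x) *
           ((fun θ => if θ ≤ β then Real.sign (α*β - θ) / Real.sqrt (2*β)
            else if θ < 1 - σ2*(1-β) then 0 else -(1 / Real.sqrt (2*σ2*(1-β)))) y))) := by
  obtain ⟨hα0, hα1⟩ := hα
  obtain ⟨hβ0, hβ1⟩ := hβ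
  obtain ⟨hσ0, hσ1⟩ := hσ
  set c : ℝ := 1 - σ2*(1-β) with hc
  have hβc : β < c := by nlinarith
  have hc1 : c < 1 := by nlinarith
  have hc0 : 0 ≤ c := by nlinarith
  have h2β : (0:ℝ) < 2*β := by linarith
  have hA : (0:ℝ) < 2*σ2*(1-β) := by nlinarith
  have hs1 : (0:ℝ) < Real.sqrt (2*β) := Real.sqrt_pos.mpr h2β
  have hs2 : (0:ℝ) < Real.sqrt (2*σ2*(1-β)) := Real.sqrt_pos.mpr hA
  have hsq1 : Real.sqrt (2*β) ^ 2 = 2*β := Real.sq_sqrt h2β.le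
  have hsq2 : Real.sqrt (2*σ2*(1-β)) ^ 2 = 2*σ2*(1-β) := Real.sq_sqrt hA.le
  have hlampos : (0:ℝ) < Real.sqrt (σ2*β*(1-β)) := Real.sqrt_pos.mpr (by nlinarith)
  have hprod : Real.sqrt (2*β) * Real.sqrt (2*σ2*(1-β)) = 2 * Real.sqrt (σ2*β*(1-β)) := by
    rw [← Real.sqrt_mul h2β.le]
    have : 2*β*(2*σ2*(1-β)) = 2^2 * (σ2*β*(1-β)) := by ring
    rw [this, Real.sqrt_mul (by positivity), Real.sqrt_sq (by norm_num)]
  refine ⟨?_, ?_, ?_, ?_⟩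
  · rw [int_helper β c ((2*β)⁻¹) ((2*σ2*(1-β))⁻¹) (α*β) hβ0.le hβ1.le hc0 hc1.le]
    · rw [hc]; field_simp; ring
    · intro θ hθ hne
      by_cases h1 : θ ≤ β
      · have hsg : Real.sign (α*β - θ) ^ 2 = 1 := sign_sq (sub_ne_zero.mpr (Ne.symm hne))
        rw [indicator_of_mem (show θ ∈ Icc (0:ℝ) β from ⟨hθ.1, h1⟩),
          indicator_of_notMem (show θ ∉ Icc c 1 from fun h => absurd h.1 (by push_neg; linarith))]
        simp only [h1, if_true]
        have e1 : (Real.sign (α*β - θ) / Real.sqrt (2*β))^2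
            = Real.sign (α*β - θ)^2 / Real.sqrt (2*β)^2 := by ring
        rw [e1, hsg, hsq1]; ring
      · rw [indicator_of_notMem (show θ ∉ Icc (0:ℝ) β from fun h => h1 h.2)]
        by_cases h2 : θ < c
        · rw [indicator_of_notMem (show θ ∉ Icc c 1 from fun h => absurd h.1 (by push_neg; linarith))]
          simp only [h1, if_false, h2, if_true]; ring
        · push_neg at h2
          rw [indicator_of_mem (show θ ∈ Icc c 1 from ⟨h2, hθ.2⟩)]
          simp only [h1, if_false, not_lt.mpr h2]
          have e1 : (1 / Real.sqrt (2*σ2*(1-β)))^2 = 1 / Real.sqrt (2*σ2*(1-β))^2 := by ring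
          rw [e1, hsq2]; ring
  · rw [int_helper β c ((2*β)⁻¹) ((2*σ2*(1-β))⁻¹) (α*β) hβ0.le hβ1.le hc0 hc1.le]
    · rw [hc]; field_simp; ring
    · intro θ hθ hne
      by_cases h1 : θ ≤ β
      · have hsg : Real.sign (α*β - θ) ^ 2 = 1 := sign_sq (sub_ne_zero.mpr (Ne.symm hne))
        rw [indicator_of_mem (show θ ∈ Icc (0:ℝ) β from ⟨hθ.1, h1⟩),
          indicator_of_notMem (show θ ∉ Icc c 1 from fun h => absurd h.1 (by push_neg; linarith))]
        simp only [h1, if_true]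
        have e1 : (Real.sign (α*β - θ) / Real.sqrt (2*β))^2
            = Real.sign (α*β - θ)^2 / Real.sqrt (2*β)^2 := by ring
        rw [e1, hsg, hsq1]; ring
      · rw [indicator_of_notMem (show θ ∉ Icc (0:ℝ) β from fun h => h1 h.2)]
        by_cases h2 : θ < c
        · rw [indicator_of_notMem (show θ ∉ Icc c 1 from fun h => absurd h.1 (by push_neg; linarith))]
          simp only [h1, if_false, h2, if_true]; ring
        · push_neg at h2
          rw [indicator_of_mem (show θ ∈ Icc c 1 from ⟨h2, hθ.2⟩)]
          simp only [h1, if_false, not_lt.mpr h2]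
          have e1 : (-(1 / Real.sqrt (2*σ2*(1-β))))^2 = 1 / Real.sqrt (2*σ2*(1-β))^2 := by ring
          rw [e1, hsq2]; ring
  · rw [int_helper β c ((2*β)⁻¹) (-(2*σ2*(1-β))⁻¹) (α*β) hβ0.le hβ1.le hc0 hc1.le]
    · rw [hc]; field_simp; ring
    · intro θ hθ hne
      by_cases h1 : θ ≤ β
      · have hsg : Real.sign (α*β - θ) ^ 2 = 1 := sign_sq (sub_ne_zero.mpr (Ne.symm hne))
        rw [indicator_of_mem (show θ ∈ Icc (0:ℝ) β from ⟨hθ.1, h1⟩),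
          indicator_of_notMem (show θ ∉ Icc c 1 from fun h => absurd h.1 (by push_neg; linarith))]
        simp only [h1, if_true]
        have e1 : Real.sign (α*β - θ) / Real.sqrt (2*β) * (Real.sign (α*β - θ) / Real.sqrt (2*β))
            = Real.sign (α*β - θ)^2 / Real.sqrt (2*β)^2 := by ring
        rw [e1, hsg, hsq1]; ring
      · rw [indicator_of_notMem (show θ ∉ Icc (0:ℝ) β from fun h => h1 h.2)]
        by_cases h2 : θ < c
        · rw [indicator_of_notMem (show θ ∉ Icc c 1 from fun h => absurd h.1 (by push_neg; linarith))]
          simp only [h1, if_false, h2, if_true]; ring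
        · push_neg at h2
          rw [indicator_of_mem (show θ ∈ Icc c 1 from ⟨h2, hθ.2⟩)]
          simp only [h1, if_false, not_lt.mpr h2]
          have e1 : (1 / Real.sqrt (2*σ2*(1-β))) * -(1 / Real.sqrt (2*σ2*(1-β)))
              = -(1 / Real.sqrt (2*σ2*(1-β))^2) := by ring
          rw [e1, hsq2]; ring
  · intro x hx y hy
    have key : ∀ s : ℝ,
        Real.sqrt (σ2*β*(1-β)) * (s / Real.sqrt (2*β) * (1 / Real.sqrt (2*σ2*(1-β))))
          + (- Real.sqrt (σ2*β*(1-β))) * (s / Real.sqrt (2*β) * -(1 / Real.sqrt (2*σ2*(1-β)))) = s := by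
      intro s
      have e1 : Real.sqrt (σ2*β*(1-β)) * (s / Real.sqrt (2*β) * (1 / Real.sqrt (2*σ2*(1-β))))
          + (- Real.sqrt (σ2*β*(1-β))) * (s / Real.sqrt (2*β) * -(1 / Real.sqrt (2*σ2*(1-β))))
          = s * (2 * Real.sqrt (σ2*β*(1-β))) / (Real.sqrt (2*β) * Real.sqrt (2*σ2*(1-β))) := by
        ring
      rw [e1, hprod, mul_div_assoc, div_self (by positivity), mul_one]
    have key2 : ∀ s : ℝ,
        Real.sqrt (σ2*β*(1-β)) * ((1 / Real.sqrt (2*σ2*(1-β))) * (s / Real.sqrt (2*β)))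
          + (- Real.sqrt (σ2*β*(1-β))) * (-(1 / Real.sqrt (2*σ2*(1-β))) * (s / Real.sqrt (2*β))) = s := by
      intro s
      have e1 : Real.sqrt (σ2*β*(1-β)) * ((1 / Real.sqrt (2*σ2*(1-β))) * (s / Real.sqrt (2*β)))
          + (- Real.sqrt (σ2*β*(1-β))) * (-(1 / Real.sqrt (2*σ2*(1-β))) * (s / Real.sqrt (2*β)))
          = s * (2 * Real.sqrt (σ2*β*(1-β))) / (Real.sqrt (2*β) * Real.sqrt (2*σ2*(1-β))) := by
        ring
      rw [e1, hprod, mul_div_assoc, div_self (by positivity), mul_one]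
    by_cases hx1 : x ≤ β
    · by_cases hy1 : y ≤ β
      · have h1 : ¬ (c ≤ y) := by push_neg; linarith
        have h2 : ¬ (c ≤ x) := by push_neg; linarith
        simp only [hx1, hy1, h1, h2, if_true, if_false, and_true, true_and, and_false,
          false_and]
        ring
      · by_cases hy2 : y < c
        · have h1 : ¬ (c ≤ y) := not_le.mpr hy2
          have h2 : ¬ (c ≤ x) := by push_neg; linarith
          simp only [hx1, hy1, hy2, h1, h2, if_true, if_false, and_true, true_and, and_false,
            false_and]
          ring
        · push_neg at hy2
          have h1 : c ≤ y := hy2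
          have h2 : ¬ (y < c) := not_lt.mpr hy2
          simp only [hx1, hy1, h1, h2, if_true, if_false, and_self, and_true, true_and,
            and_false, false_and]
          exact (key (Real.sign (α*β - x))).symm
    · by_cases hx2 : x < c
      · have h2 : ¬ (c ≤ x) := not_le.mpr hx2
        simp only [hx1, hx2, h2, if_true, if_false, false_and, and_false, true_and, and_true]
        ring
      · push_neg at hx2
        have hnx2 : ¬ (x < c) := not_lt.mpr hx2
        by_cases hy1 : y ≤ β
        · simp only [hx1, hnx2, hx2, hy1, if_true, if_false, and_self, and_true, true_and,
            false_and, and_false]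
          exact (key2 (Real.sign (α*β - y))).symm
        · by_cases hy2 : y < c
          · have h1 : ¬ (c ≤ y) := not_le.mpr hy2
            simp only [hx1, hnx2, hx2, hy1, hy2, h1, if_true, if_false, and_true, true_and,
              and_false, false_and]
            ring
          · push_neg at hy2
            have h2 : ¬ (y < c) := not_lt.mpr hy2
            simp only [hx1, hnx2, hx2, hy1, hy2, h2, if_true, if_false, and_true, true_and,
              and_false, false_and]
            ring

/-- the graphon latent function constructed from the spammer-hammer model has a
rank-two spectral decomposition with eigenvalues `±√(σ²β(1−β))` and the stated orthonormal
eigenfunctions `q₁, q₂`.  Here `I₁ ∪ I₂ = [0, β]`, `I₃ = [β, 1 − σ²(1−β)]`,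
`I₄ = [1 − σ²(1−β), 1]`. -/
theorem stmt_14 (α β σ2 : ℝ) (hα : α ∈ Set.Ioo (0:ℝ) 1) (hβ : β ∈ Set.Ioo (0:ℝ) 1)
    (hσ : σ2 ∈ Set.Ioo (0:ℝ) 1) :
    let q1 : ℝ → ℝ := fun θ =>
      if θ ≤ β then Real.sign (α*β - θ) / Real.sqrt (2*β)
      else if θ < 1 - σ2*(1-β) then 0
      else 1 / Real.sqrt (2*σ2*(1-β))
    let q2 : ℝ → ℝ := fun θ =>
      if θ ≤ β then Real.sign (α*β - θ) / Real.sqrt (2*β)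
      else if θ < 1 - σ2*(1-β) then 0
      else -(1 / Real.sqrt (2*σ2*(1-β)))
    let f : ℝ → ℝ → ℝ := fun x y =>
      if x ≤ β ∧ 1 - σ2*(1-β) ≤ y then Real.sign (α*β - x)
      else if 1 - σ2*(1-β) ≤ x ∧ y ≤ β then Real.sign (α*β - y)
      else 0
    (∫ θ in Set.Icc (0:ℝ) 1, (q1 θ)^2) = 1 ∧
    (∫ θ in Set.Icc (0:ℝ) 1, (q2 θ)^2) = 1 ∧
    (∫ θ in Set.Icc (0:ℝ) 1, q1 θ * q2 θ) = 0 ∧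
    (∀ x ∈ Set.Icc (0:ℝ) 1, ∀ y ∈ Set.Icc (0:ℝ) 1,
      f x y = Real.sqrt (σ2*β*(1-β)) * (q1 x * q1 y)
        + (- Real.sqrt (σ2*β*(1-β))) * (q2 x * q2 y)) := by
  intro q1 q2 f
  obtain ⟨h1, h2, h3, h4⟩ := big α β σ2 hα hβ hσ
  exact ⟨h1, h2, h3, fun x hx y hy => h4 x hx y hy⟩
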